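/- arXiv:2012.10216 — 2 statements merged into one kernel-verified Lean document; each statement's English description precedes it below -/
import Mathlib

section
/- Corollary (PF for imperfect groups): Let N be a finite set with n = |N| > 0, g ⊆ N nonempty, and v : N → (0,1]. Suppose that for every subset T ⊆ N that is perfectly classifiable, (1/|T|)∑_{i∈T} v(i) ≥ |T|/n. Let T* ⊆ g be a largest perfectly classifiable subset of g, and let β = |T*|/|g| (the best achievable accuracy on g). Then (1/|g|)∑_{i∈g} v(i) ≥ (|g|/n)·β². -/
/-- PF corollary for imperfect groups: if every perfectly
classifiable subset T gets average utility ≥ |T|/n, then any group g gets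
average utility ≥ (|g|/n)·β², where β = |T*|/|g| and T* is a largest perfectly
classifiable subset of g. -/
theorem stmt_5 {α : Type*} [DecidableEq α] (N : Finset α) (n : ℕ) (hn : N.card = n)
    (hnpos : 0 < n) (g : Finset α) (hgN : g ⊆ N) (hgne : g.Nonempty)
    (v : α → ℝ) (hv : ∀ i ∈ N, 0 < v i ∧ v i ≤ 1)
    (PerfClass : Finset α → Prop)
    (hPF : ∀ T : Finset α, T ⊆ N → PerfClass T → T.Nonempty →
      (1 / (T.card : ℝ)) * ∑ i ∈ T, v i ≥ (T.card : ℝ) / n)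
    (Tstar : Finset α) (hTg : Tstar ⊆ g) (hTperf : PerfClass Tstar)
    (hTne : Tstar.Nonempty)
    (hTmax : ∀ T : Finset α, T ⊆ g → PerfClass T → T.card ≤ Tstar.card)
    (β : ℝ) (hβ : β = (Tstar.card : ℝ) / g.card) :
    (1 / (g.card : ℝ)) * ∑ i ∈ g, v i ≥ ((g.card : ℝ) / n) * β ^ 2 := by
  have hgc : (0:ℝ) < g.card := by exact_mod_cast Finset.card_pos.mpr hgne
  have hTc : (0:ℝ) < Tstar.card := by exact_mod_cast Finset.card_pos.mpr hTne
  have hnR : (0:ℝ) < n := by exact_mod_cast hnpos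
  have hsum : ∑ i ∈ Tstar, v i ≥ (Tstar.card : ℝ) ^ 2 / n := by
    have h := hPF Tstar (hTg.trans hgN) hTperf hTne
    rw [ge_iff_le, div_le_iff₀ hnR]
    have h2 : (Tstar.card:ℝ)/n * Tstar.card ≤ (1/Tstar.card * ∑ i ∈ Tstar, v i) * Tstar.card := by
      exact mul_le_mul_of_nonneg_right h hTc.le
    calc (Tstar.card:ℝ)^2 = ((Tstar.card:ℝ)/n * Tstar.card) * n := by field_simp
      _ ≤ ((1/Tstar.card * ∑ i ∈ Tstar, v i) * Tstar.card) * n := by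
          exact mul_le_mul_of_nonneg_right h2 hnR.le
      _ = (∑ i ∈ Tstar, v i) * n := by field_simp
  have hmono : ∑ i ∈ Tstar, v i ≤ ∑ i ∈ g, v i := by
    apply Finset.sum_le_sum_of_subset_of_nonneg hTg
    intro i hig _
    exact (hv i (hgN hig)).1.le
  subst hβ
  have key : (Tstar.card : ℝ) ^ 2 / n ≤ ∑ i ∈ g, v i := le_trans hsum hmono
  have e1 : ((g.card:ℝ) / n) * ((Tstar.card:ℝ)/(g.card:ℝ))^2 = ((Tstar.card:ℝ)^2 / n) / g.card := by
    field_simp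
  have e2 : 1/(g.card:ℝ) * ∑ i ∈ g, v i = (∑ i ∈ g, v i) / g.card := by ring
  rw [ge_iff_le, e1, e2]
  gcongr
end

section
/- Tightness example for Greedy (Example 3): Let k ≥ 1 and n = k(k+1)/2. In the instance with data points {(j,i) : j ∈ [k], i ∈ [k-j+1]} and classifiers h_1 (covering {(1,i) : i ∈ [k]}), h_j for j = 2..k (covering {(j,i) : i ∈ [k-j+1]} ∪ {(1,j)}), and h_{k+1} (covering {(1,1)}), each of h_2, ..., h_{k+1} covers exactly one point of S = {(1,i) : i ∈ [k]}. Consequently, if a randomized classifier puts zero probability on h_1 and distributes probability among h_2,...,h_{k+1} with probabilities proportional to the new points covered in the greedy rounds (probability (k-j+1)/n on h_{j+1} for j = 1..k), then its average accuracy on S equals (1/k)·∑_{j=1}^k (k-j+1)/n = 1/k = (α/2)·((k+1)/k), where α = |S|/n = k/n = 2/(k+1). -/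
lemma aux_sum14 (k : ℕ) : ∑ j ∈ Finset.Icc 1 k, (k - j + 1) = k * (k + 1) / 2 := by
  induction k with
  | zero => simp
  | succ m ih =>
    rw [Finset.sum_Icc_succ_top (by omega : 1 ≤ m + 1)]
    have e : ∑ j ∈ Finset.Icc 1 m, (m + 1 - j + 1)
        = ∑ j ∈ Finset.Icc 1 m, ((m - j + 1) + 1) :=
      Finset.sum_congr rfl (fun j hj => by simp only [Finset.mem_Icc] at hj; omega)
    rw [e, Finset.sum_add_distrib, ih, Finset.sum_const, Nat.card_Icc, smul_eq_mul, mul_one]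
    have hB : (m + 1) * (m + 1 + 1) = m * (m + 1) + 2 * (m + 1) := by ring
    have h2 : 2 ∣ m * (m + 1) := (Nat.even_mul_succ_self m).two_dvd
    omega

/-- Tightness example for Greedy (Example 3): each of
h_2, ..., h_{k+1} covers exactly one point of S = {(1,i) : i ∈ [k]}, and the
resulting randomized classifier's average accuracy on S equals 1/k
= (α/2)·((k+1)/k) where α = k/n and n = k(k+1)/2. -/
theorem stmt_14 (k : ℕ) (hk : 1 ≤ k) (n : ℕ) (hn : n = k * (k + 1) / 2)
    (S : Finset (ℕ × ℕ)) (hS : S = (Finset.Icc 1 k).image (fun i => (1, i)))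
    (cover : ℕ → Finset (ℕ × ℕ))
    (hcov : ∀ j, 2 ≤ j → j ≤ k →
      cover j = (Finset.Icc 1 (k - j + 1)).image (fun i => (j, i)) ∪ {(1, j)})
    (hcovlast : cover (k + 1) = {(1, 1)})
    (α : ℝ) (hα : α = (k : ℝ) / n) :
    (∀ j, 2 ≤ j → j ≤ k + 1 → (S ∩ cover j).card = 1) ∧
    (1 / (k : ℝ)) * ∑ j ∈ Finset.Icc 1 k, (((k : ℝ) - j + 1) / n) = 1 / (k : ℝ) ∧
    (1 : ℝ) / k = (α / 2) * (((k : ℝ) + 1) / k) := by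
  have hmul : 1 * 2 ≤ k * (k + 1) := Nat.mul_le_mul hk (by omega)
  have hne : n ≠ 0 := by subst hn; omega
  have h2d : 2 ∣ k * (k + 1) := (Nat.even_mul_succ_self k).two_dvd
  have hnR : (n : ℝ) = k * (k + 1) / 2 := by
    rw [hn, Nat.cast_div h2d (by norm_num : (2:ℝ) ≠ 0)]; push_cast; ring
  have hkR : (k : ℝ) ≠ 0 := Nat.cast_ne_zero.mpr (by omega)
  refine ⟨?_, ?_, ?_⟩
  · intro j h2 hk1
    rcases Nat.lt_or_ge j (k + 1) with hj | hj
    · have hjk : j ≤ k := by omega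
      have : S ∩ cover j = {(1, j)} := by
        rw [hS, hcov j h2 hjk]
        ext ⟨a, b⟩
        simp only [Finset.mem_inter, Finset.mem_image, Finset.mem_union,
          Finset.mem_singleton, Finset.mem_Icc, Prod.mk.injEq]
        constructor
        · rintro ⟨⟨i, hi, hi1, hi2⟩, h⟩
          rcases h with ⟨i', hi', hi1', hi2'⟩ | h
          · omega
          · exact h
        · rintro ⟨rfl, rfl⟩
          refine ⟨⟨_, ⟨?_, ?_⟩, rfl, rfl⟩, Or.inr ⟨rfl, rfl⟩⟩ <;> omega
      rw [this]; simp
    · have : j = k + 1 := by omega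
      subst this
      have : S ∩ cover (k + 1) = {(1, 1)} := by
        rw [hS, hcovlast]
        ext ⟨a, b⟩
        simp only [Finset.mem_inter, Finset.mem_image, Finset.mem_singleton,
          Finset.mem_Icc, Prod.mk.injEq]
        constructor
        · rintro ⟨_, h⟩; exact h
        · rintro ⟨rfl, rfl⟩
          exact ⟨⟨1, ⟨le_refl 1, hk⟩, rfl, rfl⟩, rfl, rfl⟩
      rw [this]; simp
  · have hsum : ∑ j ∈ Finset.Icc 1 k, ((k : ℝ) - j + 1) = n := by
      have hc : ∀ j ∈ Finset.Icc 1 k, ((k : ℝ) - j + 1) = ((k - j + 1 : ℕ) : ℝ) := by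
        intro j hj
        simp only [Finset.mem_Icc] at hj
        push_cast [Nat.cast_sub hj.2]
        ring
      rw [Finset.sum_congr rfl hc, ← Nat.cast_sum, aux_sum14, hn]
    rw [← Finset.sum_div, hsum, div_self (Nat.cast_ne_zero.mpr hne), mul_one]
  · rw [hα, hnR]
    field_simp
end
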